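/- Under the EH prior with 0 < α ≤ 1, the marginal density p(λ;α,β,γ) = (β^α γ/Γ(α)) ∫₀^∞ x^{-α} e^{-β/x} (1+λx)^{-1} (1+log(1+λx))^{-(1+γ)} dx tends to +∞ as λ → 0⁺. -/

import Mathlib

open Real Set Filter MeasureTheory

private lemma eh_aux (α β γ : ℝ) (hα0 : 0 < α) (hα : α ≤ 1)
    (hβ : 0 < β) (hγ : 0 < γ) (l : ℝ) (hl0 : 0 < l) (hl1 : l < 1) :
    Real.exp (-β) * 2⁻¹ * (2:ℝ) ^ (-(1+γ)) * (-Real.log l) ≤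
      ∫ x in Set.Ioi (0:ℝ),
        x ^ (-α) * Real.exp (-β / x) * (1 + l * x)⁻¹ *
          (1 + Real.log (1 + l * x)) ^ (-(1 + γ)) := by
  set f : ℝ → ℝ := fun x => x ^ (-α) * Real.exp (-β / x) * (1 + l * x)⁻¹ *
      (1 + Real.log (1 + l * x)) ^ (-(1 + γ)) with hf
  have hli : (1:ℝ) < l⁻¹ := (one_lt_inv_iff₀).2 ⟨hl0, hl1⟩
  -- positivity facts
  have hbase : ∀ x : ℝ, 0 < x → (1:ℝ) ≤ 1 + l * x := fun x hx => by nlinarith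
  have hlogpos : ∀ x : ℝ, 0 < x → (1:ℝ) ≤ 1 + Real.log (1 + l * x) := fun x hx => by
    have := Real.log_nonneg (hbase x hx)
    linarith
  have hf_nonneg : ∀ x ∈ Set.Ioi (0:ℝ), 0 ≤ f x := by
    intro x hx
    have h1 : (0:ℝ) < 1 + l * x := lt_of_lt_of_le one_pos (hbase x hx)
    have h2 : (0:ℝ) < 1 + Real.log (1 + l * x) := lt_of_lt_of_le one_pos (hlogpos x hx)
    have hx0 : (0:ℝ) < x := hx
    positivity
  -- continuity
  have hcont : ContinuousOn f (Set.Ioi (0:ℝ)) := by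
    apply ContinuousOn.mul
    apply ContinuousOn.mul
    apply ContinuousOn.mul
    · exact continuousOn_id.rpow_const (fun x hx => Or.inl (ne_of_gt hx))
    · exact (continuousOn_const.div continuousOn_id (fun x hx => ne_of_gt hx)).rexp
    · refine (continuousOn_const.add (continuousOn_const.mul continuousOn_id)).inv₀
        (fun x hx => ?_)
      have := hbase x hx; intro h; simp only [Pi.add_apply, Pi.mul_apply, id_eq] at h; rw [h] at this; linarith
    · refine ContinuousOn.rpow_const ?_ (fun x hx => Or.inl ?_)
      · refine continuousOn_const.add
          ((continuousOn_const.add (continuousOn_const.mul continuousOn_id)).log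
            (fun x hx => ?_))
        have := hbase x hx; intro h; simp only [Pi.add_apply, Pi.mul_apply, id_eq] at h; rw [h] at this; linarith
      · have := hlogpos x hx; intro h; rw [h] at this; linarith
  -- integrability on Ioi 0
  have hI : IntegrableOn f (Set.Ioi (0:ℝ)) := by
    have hsplit : Set.Ioi (0:ℝ) = Set.Ioc 0 1 ∪ Set.Ioi 1 :=
      (Set.Ioc_union_Ioi_eq_Ioi zero_le_one).symm
    rw [hsplit]
    apply MeasureTheory.IntegrableOn.union
    · -- on Ioc 0 1, f ≤ β⁻¹
      apply MeasureTheory.Integrable.mono'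
        (g := fun _ : ℝ => β⁻¹) (integrableOn_const measure_Ioc_lt_top.ne)
      · exact (hcont.mono Set.Ioc_subset_Ioi_self).aestronglyMeasurable measurableSet_Ioc
      · refine (MeasureTheory.ae_restrict_iff' measurableSet_Ioc).2
          (Filter.Eventually.of_forall ?_)
        intro x hx
        have hx0 : (0:ℝ) < x := hx.1
        have hx1 : x ≤ 1 := hx.2
        have hb : (0:ℝ) < 1 + l * x := lt_of_lt_of_le one_pos (hbase x hx0)
        rw [Real.norm_of_nonneg (hf_nonneg x hx0)]
        have h1 : x ^ (-α) ≤ x⁻¹ := by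
          rw [← Real.rpow_neg_one x]
          exact Real.rpow_le_rpow_of_exponent_ge hx0 hx1 (by linarith)
        have h2 : Real.exp (-β / x) ≤ x / β := by
          have hbx : β / x ≤ Real.exp (β / x) := by
            have := Real.add_one_le_exp (β / x); linarith
          have hbxpos : (0:ℝ) < β / x := by positivity
          calc Real.exp (-β / x) = (Real.exp (β / x))⁻¹ := by
                rw [neg_div, Real.exp_neg]
            _ ≤ (β / x)⁻¹ := inv_anti₀ hbxpos hbx
            _ = x / β := inv_div β x
        have h3 : (1 + l * x)⁻¹ ≤ 1 := by
          calc (1 + l * x)⁻¹ ≤ 1⁻¹ := inv_anti₀ one_pos (hbase x hx0)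
            _ = 1 := inv_one
        have h4 : (1 + Real.log (1 + l * x)) ^ (-(1 + γ)) ≤ 1 :=
          Real.rpow_le_one_of_one_le_of_nonpos (hlogpos x hx0) (by linarith)
        have hA : x ^ (-α) * Real.exp (-β / x) ≤ x⁻¹ * (x / β) :=
          mul_le_mul h1 h2 (Real.exp_pos _).le (by positivity)
        have hB : x ^ (-α) * Real.exp (-β / x) * (1 + l * x)⁻¹ ≤ x⁻¹ * (x / β) := by
          calc x ^ (-α) * Real.exp (-β / x) * (1 + l * x)⁻¹
              ≤ x ^ (-α) * Real.exp (-β / x) * 1 :=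
                mul_le_mul_of_nonneg_left h3 (by positivity)
            _ = x ^ (-α) * Real.exp (-β / x) := mul_one _
            _ ≤ x⁻¹ * (x / β) := hA
        have hC : f x ≤ x⁻¹ * (x / β) := by
          calc f x ≤ x ^ (-α) * Real.exp (-β / x) * (1 + l * x)⁻¹ * 1 :=
                mul_le_mul_of_nonneg_left h4 (by positivity)
            _ = x ^ (-α) * Real.exp (-β / x) * (1 + l * x)⁻¹ := mul_one _
            _ ≤ x⁻¹ * (x / β) := hB
        have : x⁻¹ * (x / β) = β⁻¹ := by field_simp
        simpa [this] using hC
    · -- on Ioi 1, f ≤ l⁻¹ * x ^ (-α - 1)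
      apply MeasureTheory.Integrable.mono'
        (g := fun x : ℝ => l⁻¹ * x ^ (-α - 1))
        ((integrableOn_Ioi_rpow_of_lt (by linarith) one_pos).const_mul l⁻¹)
      · exact (hcont.mono (fun x (hx : x ∈ Set.Ioi (1:ℝ)) => (show (0:ℝ) < x from lt_trans one_pos hx))).aestronglyMeasurable
          measurableSet_Ioi
      · refine (MeasureTheory.ae_restrict_iff' measurableSet_Ioi).2
          (Filter.Eventually.of_forall ?_)
        intro x hx
        have hx1 : (1:ℝ) < x := hx
        have hx0 : (0:ℝ) < x := lt_trans one_pos hx1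
        have hb : (0:ℝ) < 1 + l * x := lt_of_lt_of_le one_pos (hbase x hx0)
        rw [Real.norm_of_nonneg (hf_nonneg x hx0)]
        have h2 : Real.exp (-β / x) ≤ 1 := by
          rw [Real.exp_le_one_iff, neg_div]
          have : (0:ℝ) < β / x := by positivity
          linarith
        have h3 : (1 + l * x)⁻¹ ≤ (l * x)⁻¹ :=
          inv_anti₀ (by positivity) (by linarith)
        have h4 : (1 + Real.log (1 + l * x)) ^ (-(1 + γ)) ≤ 1 :=
          Real.rpow_le_one_of_one_le_of_nonpos (hlogpos x hx0) (by linarith)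
        have hbn : (0:ℝ) ≤ (1 + l * x)⁻¹ := inv_nonneg.2 hb.le
        have hlog1 := hlogpos x hx0
        have hrn : (0:ℝ) ≤ (1 + Real.log (1 + l * x)) ^ (-(1 + γ)) :=
          Real.rpow_nonneg (by linarith) _
        have hxa : (0:ℝ) ≤ x ^ (-α) := Real.rpow_nonneg hx0.le _
        have hB : f x ≤ x ^ (-α) * 1 * (l * x)⁻¹ * 1 := by
          apply mul_le_mul _ h4 hrn
            (mul_nonneg (mul_nonneg hxa zero_le_one) (by positivity))
          apply mul_le_mul _ h3 hbn (mul_nonneg hxa zero_le_one)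
          exact mul_le_mul_of_nonneg_left h2 hxa
        have hpow : x ^ (-α) * x ^ (-1:ℝ) = x ^ (-α - 1) := by
          rw [← Real.rpow_add hx0]; ring_nf
        have heq : x ^ (-α) * 1 * (l * x)⁻¹ * 1 = l⁻¹ * x ^ (-α - 1) := by
          rw [mul_one, mul_one, mul_inv, ← Real.rpow_neg_one x, ← hpow]
          ring
        rw [heq] at hB
        exact hB
  -- lower bound via Ioc 1 l⁻¹
  have hsubset : Set.Ioc (1:ℝ) l⁻¹ ⊆ Set.Ioi 0 := fun x hx => lt_trans one_pos hx.1
  have hmono : ∫ x in Set.Ioc (1:ℝ) l⁻¹, f x ≤ ∫ x in Set.Ioi (0:ℝ), f x := by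
    apply setIntegral_mono_set hI
    · exact (MeasureTheory.ae_restrict_iff' measurableSet_Ioi).2
        (Filter.Eventually.of_forall hf_nonneg)
    · exact Filter.Eventually.of_forall (fun x hx => hsubset hx)
  have hpt : ∀ x ∈ Set.Ioc (1:ℝ) l⁻¹,
      Real.exp (-β) * 2⁻¹ * (2:ℝ) ^ (-(1+γ)) * x⁻¹ ≤ f x := by
    intro x hx
    have hx1 : (1:ℝ) < x := hx.1
    have hx0 : (0:ℝ) < x := lt_trans one_pos hx1
    have hlx1 : l * x ≤ 1 := by
      calc l * x ≤ l * l⁻¹ := mul_le_mul_of_nonneg_left hx.2 hl0.le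
        _ = 1 := mul_inv_cancel₀ (ne_of_gt hl0)
    have hlx0 : (0:ℝ) < l * x := by positivity
    have hb : (0:ℝ) < 1 + l * x := by linarith
    have h1 : x⁻¹ ≤ x ^ (-α) := by
      rw [← Real.rpow_neg_one x]
      exact Real.rpow_le_rpow_of_exponent_le hx1.le (by linarith)
    have h2 : Real.exp (-β) ≤ Real.exp (-β / x) := by
      apply Real.exp_le_exp.2
      rw [neg_div]
      have : β / x ≤ β := div_le_self hβ.le hx1.le
      linarith
    have h3 : (2:ℝ)⁻¹ ≤ (1 + l * x)⁻¹ := inv_anti₀ hb (by linarith)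
    have h4 : (2:ℝ) ^ (-(1+γ)) ≤ (1 + Real.log (1 + l * x)) ^ (-(1+γ)) := by
      apply Real.rpow_le_rpow_of_nonpos (lt_of_lt_of_le one_pos (hlogpos x hx0))
        _ (by linarith)
      have := Real.log_le_sub_one_of_pos hb
      linarith
    have hlogge := hlogpos x hx0
    calc Real.exp (-β) * 2⁻¹ * (2:ℝ) ^ (-(1+γ)) * x⁻¹
        = x⁻¹ * Real.exp (-β) * 2⁻¹ * (2:ℝ) ^ (-(1+γ)) := by ring
      _ ≤ f x := by
          have hbn : (0:ℝ) ≤ (1 + l * x)⁻¹ := inv_nonneg.2 hb.le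
          have hxa : (0:ℝ) ≤ x ^ (-α) := Real.rpow_nonneg hx0.le _
          apply mul_le_mul _ h4 (by positivity)
            (mul_nonneg (mul_nonneg hxa (Real.exp_pos _).le) hbn)
          apply mul_le_mul _ h3 (by norm_num)
            (mul_nonneg hxa (Real.exp_pos _).le)
          exact mul_le_mul h1 h2 (Real.exp_pos _).le hxa
  have hint_g : IntegrableOn (fun x : ℝ =>
      Real.exp (-β) * 2⁻¹ * (2:ℝ) ^ (-(1+γ)) * x⁻¹) (Set.Ioc 1 l⁻¹) := by
    apply MeasureTheory.IntegrableOn.mono_set _ Set.Ioc_subset_Icc_self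
    apply ContinuousOn.integrableOn_Icc
    exact continuousOn_const.mul (continuousOn_id.inv₀ (fun x hx =>
      ne_of_gt (lt_of_lt_of_le one_pos hx.1)))
  have hkey : ∫ x in Set.Ioc (1:ℝ) l⁻¹,
      Real.exp (-β) * 2⁻¹ * (2:ℝ) ^ (-(1+γ)) * x⁻¹ ≤ ∫ x in Set.Ioc (1:ℝ) l⁻¹, f x :=
    setIntegral_mono_on hint_g (hI.mono_set hsubset) measurableSet_Ioc hpt
  have hcomp : ∫ x in Set.Ioc (1:ℝ) l⁻¹,
      Real.exp (-β) * 2⁻¹ * (2:ℝ) ^ (-(1+γ)) * x⁻¹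
      = Real.exp (-β) * 2⁻¹ * (2:ℝ) ^ (-(1+γ)) * (-Real.log l) := by
    rw [MeasureTheory.integral_const_mul]
    congr 1
    rw [← intervalIntegral.integral_of_le hli.le,
      integral_inv_of_pos one_pos (lt_trans one_pos hli)]
    rw [div_one, Real.log_inv]
  calc Real.exp (-β) * 2⁻¹ * (2:ℝ) ^ (-(1+γ)) * (-Real.log l)
      = ∫ x in Set.Ioc (1:ℝ) l⁻¹,
          Real.exp (-β) * 2⁻¹ * (2:ℝ) ^ (-(1+γ)) * x⁻¹ := hcomp.symm
    _ ≤ ∫ x in Set.Ioc (1:ℝ) l⁻¹, f x := hkey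
    _ ≤ ∫ x in Set.Ioi (0:ℝ), f x := hmono

theorem eh_marginal_at_zero_alpha_le_one (α β γ : ℝ) (hα0 : 0 < α) (hα : α ≤ 1)
    (hβ : 0 < β) (hγ : 0 < γ) :
    Filter.Tendsto
      (fun l : ℝ => (β ^ α * γ / Real.Gamma α) *
        ∫ x in Set.Ioi (0:ℝ),
          x ^ (-α) * Real.exp (-β / x) * (1 + l * x)⁻¹ *
            (1 + Real.log (1 + l * x)) ^ (-(1 + γ)))
      (nhdsWithin 0 (Set.Ioi 0)) Filter.atTop := by
  have hK : 0 < β ^ α * γ / Real.Gamma α :=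
    div_pos (mul_pos (Real.rpow_pos_of_pos hβ α) hγ) (Real.Gamma_pos_of_pos hα0)
  have hc0 : 0 < Real.exp (-β) * 2⁻¹ * (2:ℝ) ^ (-(1+γ)) := by positivity
  have htend : Filter.Tendsto (fun l : ℝ => (β ^ α * γ / Real.Gamma α) *
      (Real.exp (-β) * 2⁻¹ * (2:ℝ) ^ (-(1+γ)) * (-Real.log l)))
      (nhdsWithin 0 (Set.Ioi 0)) Filter.atTop := by
    apply Filter.Tendsto.const_mul_atTop hK
    apply Filter.Tendsto.const_mul_atTop hc0
    exact tendsto_neg_atBot_atTop.comp Real.tendsto_log_nhdsGT_zero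
  apply tendsto_atTop_mono' _ _ htend
  filter_upwards [Ioo_mem_nhdsGT zero_lt_one] with l hl
  exact mul_le_mul_of_nonneg_left (eh_aux α β γ hα0 hα hβ hγ l hl.1 hl.2) hK.le
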